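/- Asymptotics of the Lebesgue constants: let L_n = ∫ |D_n| dσ be the L¹(T)-norm of the n-th Dirichlet kernel. Then L_n = (4/π²) ln n + O(1); that is, there is a constant C such that |L_n − (4/π²) ln n| ≤ C for all n ≥ 1. -/

import Mathlib

open MeasureTheory Filter Real Set

/-- The Dirichlet kernel `D_n(x) = ∑_{k=-n}^{n} e^{ikx}`. -/
noncomputable def dirichletKernel (n : ℕ) (x : ℝ) : ℂ :=
  ∑ k ∈ Finset.Icc (-(n : ℤ)) (n : ℤ), Complex.exp (Complex.I * (k : ℂ) * (x : ℂ))

/-- The Lebesgue constant `L_n = ∫ |D_n| dσ = (1/(2π)) ∫_{-π}^{π} |D_n(x)| dx`. -/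
noncomputable def lebesgueConstant (n : ℕ) : ℝ :=
  (1 / (2 * π)) * ∫ x in (-π)..π, ‖dirichletKernel n x‖

namespace LebAux

lemma alg (w : ℂ) (hw : w ≠ 0) (n : ℕ) :
    (w⁻¹ - w) * ∑ k ∈ Finset.Icc (-(n : ℤ)) (n : ℤ), (w ^ 2) ^ k
      = (w ^ (2 * n + 1))⁻¹ - w ^ (2 * n + 1) := by
  induction n with
  | zero => simp
  | succ n ih =>
    have hIcc : Finset.Icc (-((n+1 : ℕ) : ℤ)) ((n+1 : ℕ) : ℤ)
        = insert (-((n+1 : ℕ) : ℤ)) (insert ((n+1 : ℕ) : ℤ) (Finset.Icc (-(n : ℤ)) (n : ℤ))) := by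
      ext k; simp only [Finset.mem_Icc, Finset.mem_insert]; omega
    rw [hIcc, Finset.sum_insert (by simp only [Finset.mem_Icc, Finset.mem_insert]; omega),
      Finset.sum_insert (by simp only [Finset.mem_Icc]; omega)]
    have h1 : ((w ^ 2) ^ (-((n+1 : ℕ) : ℤ))) = (w ^ (2*n+2))⁻¹ := by
      rw [zpow_neg, zpow_natCast, ← pow_mul]; ring_nf
    have h2 : ((w ^ 2) ^ (((n+1 : ℕ)) : ℤ)) = w ^ (2*n+2) := by
      rw [zpow_natCast, ← pow_mul]; ring_nf
    rw [mul_add, mul_add, ih, h1, h2]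
    have h3 : 2 * (n+1) + 1 = 2*n+3 := by ring
    rw [h3]
    field_simp
    ring

lemma kernel_identity (n : ℕ) (x : ℝ) :
    Complex.sin ((x : ℂ) / 2) * dirichletKernel n x
      = Complex.sin (((n : ℂ) + 1/2) * (x : ℂ)) := by
  set w : ℂ := Complex.exp (Complex.I * (x : ℂ) / 2) with hwdef
  have hw : w ≠ 0 := Complex.exp_ne_zero _
  have e1 : w ^ 2 = Complex.exp (Complex.I * x) := by
    rw [hwdef, ← Complex.exp_nat_mul]; congr 1; push_cast; ring
  have hsum : dirichletKernel n x = ∑ k ∈ Finset.Icc (-(n : ℤ)) (n : ℤ), (w ^ 2) ^ k := by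
    unfold dirichletKernel
    refine Finset.sum_congr rfl fun k _ => ?_
    rw [e1, ← Complex.exp_int_mul]; congr 1; ring
  have hsin1 : Complex.sin ((x : ℂ) / 2) = (w⁻¹ - w) * Complex.I / 2 := by
    simp only [Complex.sin]
    rw [show -((x:ℂ)/2) * Complex.I = -(Complex.I * (x:ℂ) / 2) by ring, Complex.exp_neg,
      show ((x:ℂ)/2) * Complex.I = Complex.I * (x:ℂ) / 2 by ring]
  have hsin2 : Complex.sin (((n : ℂ) + 1/2) * (x : ℂ))
      = ((w ^ (2*n+1))⁻¹ - w ^ (2*n+1)) * Complex.I / 2 := by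
    simp only [Complex.sin]
    rw [show -(((n:ℂ) + 1/2) * (x:ℂ)) * Complex.I
        = -(((2*n+1 : ℕ) : ℂ) * (Complex.I * (x:ℂ) / 2)) by push_cast; ring,
      Complex.exp_neg,
      show (((n:ℂ) + 1/2) * (x:ℂ)) * Complex.I
        = ((2*n+1 : ℕ) : ℂ) * (Complex.I * (x:ℂ) / 2) by push_cast; ring,
      Complex.exp_nat_mul]
  rw [hsin1, hsum, hsin2]
  linear_combination (Complex.I / 2) * alg w hw n

lemma norm_dk (n : ℕ) {x : ℝ} (h0 : 0 < x) (hπ : x ≤ π) :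
    ‖dirichletKernel n x‖ = |Real.sin (((n:ℝ) + 1/2) * x)| / Real.sin (x/2) := by
  have hpos : 0 < Real.sin (x/2) :=
    sin_pos_of_pos_of_lt_pi (by linarith) (by linarith [pi_pos])
  have key := kernel_identity n x
  have e1 : Complex.sin ((x:ℂ)/2) = ((Real.sin (x/2) : ℝ) : ℂ) := by
    rw [Complex.ofReal_sin]; push_cast; ring_nf
  have e2 : Complex.sin (((n:ℂ) + 1/2) * (x:ℂ))
      = ((Real.sin (((n:ℝ) + 1/2) * x) : ℝ) : ℂ) := by
    rw [Complex.ofReal_sin]; push_cast; ring_nf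
  rw [e1, e2] at key
  have h := congrArg (fun z : ℂ => ‖z‖) key
  simp only [norm_mul, Complex.norm_real, Real.norm_eq_abs] at h
  rw [abs_of_pos hpos] at h
  rw [eq_div_iff hpos.ne', mul_comm]
  exact h

lemma dk_even (n : ℕ) (x : ℝ) : dirichletKernel n (-x) = dirichletKernel n x := by
  unfold dirichletKernel
  refine Finset.sum_equiv (Equiv.neg ℤ) (fun k => by simp only [Finset.mem_Icc, Equiv.neg_apply]; omega)
    (fun k hk => ?_)
  simp only [Equiv.neg_apply]
  congr 1
  push_cast
  ring

lemma dk_cont (n : ℕ) : Continuous fun x : ℝ => ‖dirichletKernel n x‖ := by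
  apply Continuous.norm
  unfold dirichletKernel
  exact continuous_finset_sum _ fun k _ =>
    Complex.continuous_exp.comp (continuous_const.mul Complex.continuous_ofReal)

/-- Integrability of a function continuous and bounded on `Ioc a b`. -/
lemma ii_of_bdd {f : ℝ → ℝ} {a b M : ℝ} (hab : a ≤ b)
    (hf : ContinuousOn f (Ioc a b)) (hM : ∀ x ∈ Ioc a b, |f x| ≤ M) :
    IntervalIntegrable f volume a b := by
  rw [intervalIntegrable_iff_integrableOn_Ioc_of_le hab]
  apply Integrable.mono' (g := fun _ => M) (integrable_const M)
  · exact hf.aestronglyMeasurable measurableSet_Ioc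
  · exact ae_restrict_of_forall_mem measurableSet_Ioc fun x hx => by
      simpa [Real.norm_eq_abs] using hM x hx

noncomputable def F : ℝ → ℝ := fun u => |Real.sin u| / u

lemma F_contOn {s : Set ℝ} (hs : ∀ u ∈ s, u ≠ 0) : ContinuousOn F s :=
  ContinuousOn.div (Real.continuous_sin.abs.continuousOn) continuousOn_id hs

lemma F_ii_pos {a b : ℝ} (ha : 0 < a) (hab : a ≤ b) : IntervalIntegrable F volume a b := by
  apply ContinuousOn.intervalIntegrable
  apply F_contOn
  intro u hu
  rw [uIcc_of_le hab] at hu; exact (lt_of_lt_of_le ha hu.1).ne'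

lemma F_nonneg (u : ℝ) (hu : 0 < u) : 0 ≤ F u := div_nonneg (abs_nonneg _) hu.le

lemma F_le_one {u : ℝ} (hu : 0 < u) : F u ≤ 1 := by
  rw [F, div_le_one hu]
  calc |Real.sin u| ≤ |u| := Real.abs_sin_le_abs
  _ = u := abs_of_pos hu

lemma F_ii_zero : IntervalIntegrable F volume 0 π := by
  apply ii_of_bdd pi_pos.le (F_contOn fun u hu => hu.1.ne')
  intro x hx
  rw [abs_of_nonneg (F_nonneg x hx.1)]
  exact F_le_one hx.1

lemma int_abs_sin (k : ℕ) : (∫ u in ((k:ℝ)*π)..((k:ℝ)+1)*π, |Real.sin u|) = 2 := by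
  have hper : Function.Periodic (fun u => |Real.sin u|) π := fun u => by
    simp [Real.sin_add_pi]
  have h := hper.intervalIntegral_add_eq ((k:ℝ)*π) 0
  rw [show ((k:ℝ)*π + π) = ((k:ℝ)+1)*π by ring, zero_add] at h
  rw [h]
  have : (∫ u in (0:ℝ)..π, |Real.sin u|) = ∫ u in (0:ℝ)..π, Real.sin u := by
    apply intervalIntegral.integral_congr
    intro x hx
    rw [uIcc_of_le pi_pos.le] at hx
    exact abs_of_nonneg (Real.sin_nonneg_of_nonneg_of_le_pi hx.1 hx.2)
  rw [this, integral_sin]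
  norm_num

/-- Per-interval comparison. -/
lemma interval_est (m : ℕ) (hm : 1 ≤ m) :
    |(∫ u in ((m:ℝ)*π)..(((m:ℝ)+1)*π), F u)
      - (2/π) * (Real.log ((m:ℝ)+1) - Real.log (m:ℝ))|
      ≤ 2/((m:ℝ)*π) - 2/(((m:ℝ)+1)*π) := by
  have hm1 : (1:ℝ) ≤ (m:ℝ) := by exact_mod_cast hm
  have hmpos : (0:ℝ) < m := by linarith
  have hle : (m:ℝ)*π ≤ ((m:ℝ)+1)*π := by nlinarith [pi_pos]
  have hmp : (0:ℝ) < (m:ℝ)*π := by positivity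
  have hmp1 : (0:ℝ) < ((m:ℝ)+1)*π := by positivity
  -- bounds for the integral A
  have hAlow : 2/(((m:ℝ)+1)*π) ≤ ∫ u in ((m:ℝ)*π)..(((m:ℝ)+1)*π), F u := by
    have hmono : (∫ u in ((m:ℝ)*π)..(((m:ℝ)+1)*π), |Real.sin u| * (1/(((m:ℝ)+1)*π)))
        ≤ ∫ u in ((m:ℝ)*π)..(((m:ℝ)+1)*π), F u := by
      apply intervalIntegral.integral_mono_on hle
        (by apply Continuous.intervalIntegrable; continuity) (F_ii_pos hmp hle)
      intro u hu
      rw [mul_one_div, F]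
      exact div_le_div_of_nonneg_left (abs_nonneg _) (lt_of_lt_of_le hmp hu.1) hu.2
    rw [intervalIntegral.integral_mul_const, int_abs_sin m] at hmono
    calc 2/(((m:ℝ)+1)*π) = 2 * (1/(((m:ℝ)+1)*π)) := by ring
    _ ≤ _ := hmono
  have hAhigh : (∫ u in ((m:ℝ)*π)..(((m:ℝ)+1)*π), F u) ≤ 2/((m:ℝ)*π) := by
    have hmono : (∫ u in ((m:ℝ)*π)..(((m:ℝ)+1)*π), F u)
        ≤ ∫ u in ((m:ℝ)*π)..(((m:ℝ)+1)*π), |Real.sin u| * (1/((m:ℝ)*π)) := by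
      apply intervalIntegral.integral_mono_on hle (F_ii_pos hmp hle)
        (by apply Continuous.intervalIntegrable; continuity)
      intro u hu
      rw [mul_one_div, F]
      exact div_le_div_of_nonneg_left (abs_nonneg _) hmp hu.1
    rw [intervalIntegral.integral_mul_const, int_abs_sin m] at hmono
    calc (∫ u in ((m:ℝ)*π)..(((m:ℝ)+1)*π), F u) ≤ 2 * (1/((m:ℝ)*π)) := hmono
    _ = 2/((m:ℝ)*π) := by ring
  -- bounds for B
  have hlog_up : Real.log ((m:ℝ)+1) - Real.log (m:ℝ) ≤ 1/(m:ℝ) := by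
    rw [← Real.log_div (by linarith) (by linarith)]
    calc Real.log (((m:ℝ)+1)/(m:ℝ)) ≤ ((m:ℝ)+1)/(m:ℝ) - 1 :=
      Real.log_le_sub_one_of_pos (by positivity)
    _ = 1/(m:ℝ) := by field_simp; ring
  have hlog_low : 1/((m:ℝ)+1) ≤ Real.log ((m:ℝ)+1) - Real.log (m:ℝ) := by
    have := Real.log_le_sub_one_of_pos (x := (m:ℝ)/((m:ℝ)+1)) (by positivity)
    rw [Real.log_div (by linarith) (by linarith)] at this
    have h2 : (m:ℝ)/((m:ℝ)+1) - 1 = -(1/((m:ℝ)+1)) := by field_simp; ring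
    rw [h2] at this
    linarith
  have hBlow : 2/(((m:ℝ)+1)*π) ≤ (2/π) * (Real.log ((m:ℝ)+1) - Real.log (m:ℝ)) := by
    have : 2/(((m:ℝ)+1)*π) = (2/π) * (1/((m:ℝ)+1)) := by field_simp
    rw [this]
    apply mul_le_mul_of_nonneg_left hlog_low (by positivity)
  have hBhigh : (2/π) * (Real.log ((m:ℝ)+1) - Real.log (m:ℝ)) ≤ 2/((m:ℝ)*π) := by
    have h2 : 2/((m:ℝ)*π) = (2/π) * (1/(m:ℝ)) := by field_simp
    rw [h2]
    apply mul_le_mul_of_nonneg_left hlog_up (by positivity)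
  rw [abs_sub_le_iff]
  constructor <;> linarith

lemma sum_est (n : ℕ) (hn : 1 ≤ n) :
    |(∫ u in π..((n:ℝ)*π), F u) - (2/π) * Real.log n| ≤ 2/π := by
  have hcast : ((n-1:ℕ):ℝ) = (n:ℝ) - 1 := by
    rw [Nat.cast_sub hn]; push_cast; ring
  set a : ℕ → ℝ := fun k => ((k:ℝ)+1)*π with ha
  have hint : ∀ k, k < n-1 → IntervalIntegrable F volume (a k) (a (k+1)) := by
    intro k _
    apply F_ii_pos (by positivity)
    simp only [ha]; push_cast; nlinarith [pi_pos]
  have hsum := intervalIntegral.sum_integral_adjacent_intervals (a := a) (μ := volume) hint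
  have ha0 : a 0 = π := by simp [ha]
  have han : a (n-1) = (n:ℝ)*π := by simp only [ha, hcast]; ring
  rw [ha0, han] at hsum
  rw [← hsum]
  have hlog : (2/π) * Real.log n
      = ∑ k ∈ Finset.range (n-1),
          (2/π) * (Real.log ((k:ℝ)+1+1) - Real.log ((k:ℝ)+1)) := by
    rw [← Finset.mul_sum]
    congr 1
    have htel := Finset.sum_range_sub (f := fun i : ℕ => Real.log ((i:ℝ)+1)) (n-1)
    rw [hcast] at htel
    simp only [Nat.cast_zero, zero_add, Real.log_one, sub_zero] at htel
    rw [show (n:ℝ) - 1 + 1 = (n:ℝ) by ring] at htel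
    rw [← htel]
    apply Finset.sum_congr rfl
    intro k _
    push_cast
    ring_nf
  rw [hlog, ← Finset.sum_sub_distrib]
  have habs := Finset.abs_sum_le_sum_abs
    (fun k => (∫ u in a k..a (k+1), F u)
      - (2/π) * (Real.log ((k:ℝ)+1+1) - Real.log ((k:ℝ)+1))) (Finset.range (n-1))
  refine habs.trans ?_
  have hterm : ∀ k ∈ Finset.range (n-1),
      |(∫ u in a k..a (k+1), F u)
        - (2/π) * (Real.log ((k:ℝ)+1+1) - Real.log ((k:ℝ)+1))|
      ≤ 2/(((k:ℝ)+1)*π) - 2/(((k:ℝ)+1+1)*π) := by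
    intro k _
    have h := interval_est (k+1) (Nat.le_add_left 1 k)
    push_cast at h
    simp only [ha]
    push_cast
    convert h using 4 <;> ring
  refine (Finset.sum_le_sum hterm).trans ?_
  have htel2 := Finset.sum_range_sub' (f := fun i : ℕ => 2/(((i:ℝ)+1)*π)) (n-1)
  have : ∑ k ∈ Finset.range (n-1),
      (2/(((k:ℝ)+1)*π) - 2/(((k:ℝ)+1+1)*π))
      = 2/((((0:ℕ):ℝ)+1)*π) - 2/((((n-1:ℕ):ℝ)+1)*π) := by
    rw [← htel2]
    apply Finset.sum_congr rfl
    intro k _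
    push_cast
    ring_nf
  rw [this]
  have h2 : 0 ≤ 2/((((n-1:ℕ):ℝ)+1)*π) := by positivity
  have h3 : 2/((((0:ℕ):ℝ)+1)*π) = 2/π := by norm_num
  linarith

lemma J_est (n : ℕ) (hn : 1 ≤ n) :
    |(∫ u in (0:ℝ)..(((n:ℝ)+1/2)*π), F u) - (2/π) * Real.log n| ≤ π + 2/π + 1/2 := by
  have hπ := pi_pos
  have hn1 : (1:ℝ) ≤ (n:ℝ) := by exact_mod_cast hn
  have h2 : π ≤ (n:ℝ)*π := by nlinarith
  have h3 : (n:ℝ)*π ≤ ((n:ℝ)+1/2)*π := by nlinarith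
  have hnp : (0:ℝ) < (n:ℝ)*π := by nlinarith
  have i1 : IntervalIntegrable F volume 0 π := F_ii_zero
  have i2 : IntervalIntegrable F volume π ((n:ℝ)*π) := F_ii_pos hπ h2
  have i3 : IntervalIntegrable F volume ((n:ℝ)*π) (((n:ℝ)+1/2)*π) := F_ii_pos hnp h3
  have hadd1 := intervalIntegral.integral_add_adjacent_intervals i1 i2
  have hadd2 := intervalIntegral.integral_add_adjacent_intervals (i1.trans i2) i3
  have hhead : |∫ u in (0:ℝ)..π, F u| ≤ π := by
    have hb := intervalIntegral.norm_integral_le_of_norm_le_const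
      (C := 1) (f := F) (a := 0) (b := π) ?_
    · rw [Real.norm_eq_abs] at hb
      calc |∫ u in (0:ℝ)..π, F u| ≤ 1 * |π - 0| := hb
      _ = π := by rw [sub_zero, abs_of_pos hπ]; ring
    · intro x hx
      rw [uIoc_of_le hπ.le] at hx
      rw [Real.norm_eq_abs, abs_of_nonneg (F_nonneg x hx.1)]
      exact F_le_one hx.1
  have htail : |∫ u in ((n:ℝ)*π)..(((n:ℝ)+1/2)*π), F u| ≤ 1/2 := by
    have hb := intervalIntegral.norm_integral_le_of_norm_le_const
      (C := 1/((n:ℝ)*π)) (f := F) (a := (n:ℝ)*π) (b := ((n:ℝ)+1/2)*π) ?_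
    · rw [Real.norm_eq_abs] at hb
      have he : |((n:ℝ)+1/2)*π - (n:ℝ)*π| = π/2 := by
        rw [show ((n:ℝ)+1/2)*π - (n:ℝ)*π = π/2 by ring, abs_of_pos (by linarith)]
      rw [he] at hb
      calc |∫ u in ((n:ℝ)*π)..(((n:ℝ)+1/2)*π), F u| ≤ 1/((n:ℝ)*π) * (π/2) := hb
      _ = 1/(2*(n:ℝ)) := by field_simp
      _ ≤ 1/2 := by
        rw [div_le_div_iff₀ (by linarith) (by norm_num)]
        linarith
    · intro x hx
      rw [uIoc_of_le h3] at hx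
      have hxpos : 0 < x := lt_of_le_of_lt hnp.le hx.1
      rw [Real.norm_eq_abs, abs_of_nonneg (F_nonneg x hxpos)]
      calc F x ≤ 1/x := by
            rw [F, div_le_div_iff₀ hxpos hxpos]
            calc |Real.sin x| * x ≤ 1 * x :=
              mul_le_mul_of_nonneg_right (Real.abs_sin_le_one x) hxpos.le
            _ = 1 * x := rfl
      _ ≤ 1/((n:ℝ)*π) := by
        rw [div_le_div_iff₀ hxpos hnp]
        nlinarith [hx.1]
  have hmid := sum_est n hn
  rw [← hadd2, ← hadd1]
  have key : (∫ u in (0:ℝ)..π, F u) + (∫ u in π..((n:ℝ)*π), F u)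
      + (∫ u in ((n:ℝ)*π)..(((n:ℝ)+1/2)*π), F u) - (2/π) * Real.log n
      = ((∫ u in (0:ℝ)..π, F u) + ((∫ u in π..((n:ℝ)*π), F u) - (2/π) * Real.log n))
        + (∫ u in ((n:ℝ)*π)..(((n:ℝ)+1/2)*π), F u) := by ring
  rw [key]
  refine (abs_add_le _ _).trans ?_
  refine add_le_add ((abs_add_le _ _).trans (add_le_add hhead hmid)) htail

lemma f1_ii (n : ℕ) :
    IntervalIntegrable (fun x => |Real.sin (((n:ℝ)+1/2)*x)| / Real.sin (x/2))
      volume 0 π := by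
  set N : ℝ := (n:ℝ)+1/2 with hN
  have hNpos : 0 < N := by rw [hN]; positivity
  apply ii_of_bdd (M := N*π) pi_pos.le
  · apply ContinuousOn.div
    · exact (Real.continuous_sin.comp (continuous_const.mul continuous_id)).abs.continuousOn
    · exact (Real.continuous_sin.comp (continuous_id.div_const 2)).continuousOn
    · intro x hx
      exact (sin_pos_of_pos_of_lt_pi (by linarith [hx.1]) (by linarith [hx.2, pi_pos])).ne'
  · intro x hx
    have hx0 := hx.1
    have hxπ := hx.2
    have hspos : 0 < Real.sin (x/2) :=
      sin_pos_of_pos_of_lt_pi (by linarith) (by linarith [pi_pos])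
    have hjordan : x/π ≤ Real.sin (x/2) := by
      have := Real.mul_le_sin (x := x/2) (by linarith) (by linarith)
      calc x/π = 2/π * (x/2) := by ring
      _ ≤ _ := this
    have hnum : |Real.sin (N*x)| ≤ N*x := by
      calc |Real.sin (N*x)| ≤ |N*x| := Real.abs_sin_le_abs
      _ = N*x := abs_of_pos (by positivity)
    rw [abs_of_nonneg (div_nonneg (abs_nonneg _) hspos.le)]
    calc |Real.sin (N*x)| / Real.sin (x/2) ≤ (N*x)/(x/π) :=
      div_le_div₀ (by positivity) hnum (by positivity) hjordan
    _ = N*π := by field_simp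

lemma f2_ii (n : ℕ) :
    IntervalIntegrable (fun x => 2*|Real.sin (((n:ℝ)+1/2)*x)| / x) volume 0 π := by
  set N : ℝ := (n:ℝ)+1/2 with hN
  have hNpos : 0 < N := by rw [hN]; positivity
  apply ii_of_bdd (M := 2*N) pi_pos.le
  · apply ContinuousOn.div
    · exact (continuous_const.mul (Real.continuous_sin.comp (continuous_const.mul continuous_id)).abs).continuousOn
    · exact continuousOn_id
    · intro x hx; exact hx.1.ne'
  · intro x hx
    have hx0 := hx.1
    have hnum : |Real.sin (N*x)| ≤ N*x := by
      calc |Real.sin (N*x)| ≤ |N*x| := Real.abs_sin_le_abs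
      _ = N*x := abs_of_pos (by positivity)
    rw [abs_of_nonneg (by positivity)]
    calc 2*|Real.sin (N*x)| / x ≤ 2*(N*x)/x :=
      (div_le_div_iff_of_pos_right hx0).mpr (by linarith)
    _ = 2*N := by field_simp [hx0.ne']

lemma gap_bound {x : ℝ} (hx0 : 0 < x) (hxπ : x ≤ π) :
    0 ≤ 1/Real.sin (x/2) - 2/x ∧ 1/Real.sin (x/2) - 2/x ≤ 2 := by
  have hπ := pi_pos
  have hspos : 0 < Real.sin (x/2) :=
    sin_pos_of_pos_of_lt_pi (by linarith) (by linarith)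
  have hsle : Real.sin (x/2) ≤ x/2 := (Real.sin_lt (by linarith)).le
  constructor
  · have h1 : 1/(x/2) ≤ 1/Real.sin (x/2) := one_div_le_one_div_of_le hspos hsle
    have h2 : (2:ℝ)/x = 1/(x/2) := by field_simp
    linarith
  · rcases le_total x 2 with hx2 | hx2
    · -- small x : cubic bound
      have ht1 : x/2 ≤ 1 := by linarith
      have hcube := Real.sin_gt_sub_cube (x := x/2) (by linarith)
      have ht3 : (x/2)^3 ≤ x/2 := by nlinarith [sq_nonneg (x/2)]
      have hlb : 3/4 * (x/2) ≤ Real.sin (x/2) := by nlinarith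
      rw [div_sub_div _ _ hspos.ne' hx0.ne', div_le_iff₀ (by positivity)]
      nlinarith [hcube, hlb, ht3, sq_nonneg (x/2), mul_pos hx0 hx0]
    · -- large x : Jordan bound
      have hjordan : x/π ≤ Real.sin (x/2) := by
        have := Real.mul_le_sin (x := x/2) (by linarith) (by linarith)
        calc x/π = 2/π * (x/2) := by ring
        _ ≤ _ := this
      have hxpi : π * (x/π) = x := by field_simp
      have h1 : 1/Real.sin (x/2) ≤ π/2 := by
        rw [div_le_div_iff₀ hspos (by norm_num)]
        nlinarith [mul_le_mul_of_nonneg_left hjordan hπ.le, hxpi, hx2]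
      have h2 : 0 < 2/x := by positivity
      have : π ≤ 4 := by nlinarith [Real.pi_le_four]
      linarith

lemma f1_f2_diff (n : ℕ) :
    |(∫ x in (0:ℝ)..π, |Real.sin (((n:ℝ)+1/2)*x)| / Real.sin (x/2))
      - ∫ x in (0:ℝ)..π, 2*|Real.sin (((n:ℝ)+1/2)*x)| / x| ≤ 2*π := by
  set N : ℝ := (n:ℝ)+1/2 with hN
  rw [← intervalIntegral.integral_sub (f1_ii n) (f2_ii n)]
  have hb := intervalIntegral.norm_integral_le_of_norm_le_const (C := 2)
    (f := fun x => |Real.sin (N*x)| / Real.sin (x/2) - 2*|Real.sin (N*x)| / x)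
    (a := 0) (b := π) ?_
  · rw [Real.norm_eq_abs] at hb
    calc _ ≤ 2 * |π - 0| := hb
    _ = 2*π := by rw [sub_zero, abs_of_pos pi_pos]
  · intro x hx
    beta_reduce
    rw [uIoc_of_le pi_pos.le] at hx
    obtain ⟨hg0, hg2⟩ := gap_bound hx.1 hx.2
    have hd : |Real.sin (N*x)| / Real.sin (x/2) - 2*|Real.sin (N*x)| / x
        = |Real.sin (N*x)| * (1/Real.sin (x/2) - 2/x) := by ring
    rw [Real.norm_eq_abs, hd, abs_of_nonneg (mul_nonneg (abs_nonneg _) hg0)]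
    calc |Real.sin (N*x)| * (1/Real.sin (x/2) - 2/x)
        ≤ 1 * (1/Real.sin (x/2) - 2/x) :=
      mul_le_mul_of_nonneg_right (Real.abs_sin_le_one _) hg0
    _ ≤ 2 := by linarith

lemma int_f2_eq (n : ℕ) :
    (∫ x in (0:ℝ)..π, 2*|Real.sin (((n:ℝ)+1/2)*x)| / x)
      = 2 * ∫ u in (0:ℝ)..(((n:ℝ)+1/2)*π), F u := by
  set N : ℝ := (n:ℝ)+1/2 with hN
  have hNpos : (0:ℝ) < N := by rw [hN]; positivity
  have hfe : ∀ x : ℝ, 2*|Real.sin (N*x)| / x = (2*N) * F (N*x) := by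
    intro x
    by_cases hx : x = 0
    · simp [hx, F]
    · rw [F]; field_simp
  simp only [hfe]
  rw [intervalIntegral.integral_const_mul,
    intervalIntegral.integral_comp_mul_left F hNpos.ne']
  rw [mul_zero]
  rw [smul_eq_mul]
  field_simp

end LebAux

open LebAux

/-- Asymptotics of the Lebesgue constants: `L_n = (4/π²) ln n + O(1)`. -/
theorem lebesgueConstant_asymptotics :
    ∃ C : ℝ, ∀ n : ℕ, 1 ≤ n →
      |lebesgueConstant n - (4 / π ^ 2) * Real.log n| ≤ C := by
  use (1/π) * (2*π + (2*π + 4/π + 1))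
  intro n hn
  have hπ := pi_pos
  -- reduce to the half-interval integral
  have hint : ∀ a b : ℝ, IntervalIntegrable (fun x => ‖dirichletKernel n x‖) volume a b :=
    fun a b => (dk_cont n).intervalIntegrable a b
  have heven : (∫ x in (-π)..(0:ℝ), ‖dirichletKernel n x‖)
      = ∫ x in (0:ℝ)..π, ‖dirichletKernel n x‖ := by
    have h := intervalIntegral.integral_comp_neg (a := 0) (b := π)
      (fun x => ‖dirichletKernel n x‖)
    rw [neg_zero] at h
    rw [← h]
    apply intervalIntegral.integral_congr
    intro x _
    simp [dk_even]
  have hsplit := intervalIntegral.integral_add_adjacent_intervals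
    (a := -π) (b := 0) (c := π) (hint _ _) (hint _ _)
  have hL : lebesgueConstant n = (1/π) * ∫ x in (0:ℝ)..π, ‖dirichletKernel n x‖ := by
    unfold lebesgueConstant
    rw [← hsplit, heven]
    field_simp
    ring
  have hcongr : (∫ x in (0:ℝ)..π, ‖dirichletKernel n x‖)
      = ∫ x in (0:ℝ)..π, |Real.sin (((n:ℝ)+1/2)*x)| / Real.sin (x/2) := by
    apply intervalIntegral.integral_congr_ae
    refine Eventually.of_forall fun x hx => ?_
    rw [uIoc_of_le hπ.le] at hx
    exact norm_dk n hx.1 hx.2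
  have hJ := J_est n hn
  have hdiff := f1_f2_diff n
  have hf2 := int_f2_eq n
  set I1 := ∫ x in (0:ℝ)..π, |Real.sin (((n:ℝ)+1/2)*x)| / Real.sin (x/2) with hI1
  set I2 := ∫ x in (0:ℝ)..π, 2*|Real.sin (((n:ℝ)+1/2)*x)| / x with hI2
  set J := ∫ u in (0:ℝ)..(((n:ℝ)+1/2)*π), F u with hJdef
  have hX : |I1 - (4/π) * Real.log n| ≤ 2*π + (2*π + 4/π + 1) := by
    have h2 : |I2 - (4/π) * Real.log n| ≤ 2*π + 4/π + 1 := by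
      rw [hf2, show 2*J - (4/π) * Real.log n = 2*(J - (2/π) * Real.log n) by ring,
        abs_mul, abs_two]
      have h4 : (4:ℝ)/π = 2*(2/π) := by ring
      linarith
    calc |I1 - (4/π) * Real.log n|
        = |(I1 - I2) + (I2 - (4/π) * Real.log n)| := by ring_nf
    _ ≤ |I1 - I2| + |I2 - (4/π) * Real.log n| := abs_add_le _ _
    _ ≤ 2*π + (2*π + 4/π + 1) := add_le_add hdiff h2
  have hfinal : lebesgueConstant n - (4/π^2) * Real.log n
      = (1/π) * (I1 - (4/π) * Real.log n) := by
    rw [hL, hcongr]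
    have hπ0 : π ≠ 0 := pi_ne_zero
    field_simp
  rw [hfinal, abs_mul, abs_of_pos (by positivity : (0:ℝ) < 1/π)]
  exact mul_le_mul_of_nonneg_left hX (by positivity)
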